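/- Let f : ℝ³ → ℂ³ be a function whose Fourier transform f̂ is supported in the closed unit ball B₁(0) with ‖f̂‖_{L²} = M₀ < ∞. For λ > 1 define v_λ via v̂_λ(ξ) = i ξ × f̂(ξ − λe₃)/|ξ|. Then the Fourier support of v_λ is contained in the cone {ξ : angle(ξ, e₃) ≤ arcsin(1/λ)}, and ‖v_λ‖_{Ḣ^{1/2}} ≤ C λ^{1/2} ‖f̂‖_{L²} for a universal constant C. -/

import Mathlib

open MeasureTheory InnerProductGeometry

noncomputable section

abbrev E3 := EuclideanSpace ℝ (Fin 3)

def e3 : E3 := EuclideanSpace.single 2 1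

def vhat (Fh : E3 → Fin 3 → ℂ) (lam : ℝ) (ξ : E3) : Fin 3 → ℂ :=
  (Complex.I * ((‖ξ‖ : ℂ))⁻¹) •
    crossProduct (fun j => ((ξ j : ℝ) : ℂ)) (Fh (ξ - lam • e3))

lemma norm_sq_eq (x : E3) : ‖x‖ ^ 2 = (x 0) ^ 2 + (x 1) ^ 2 + (x 2) ^ 2 := by
  rw [EuclideanSpace.norm_eq, Real.sq_sqrt (by positivity)]
  simp [Fin.sum_univ_three, Real.norm_eq_abs, sq_abs]

lemma abs_coord_le (x : E3) (i : Fin 3) : |x i| ≤ ‖x‖ := by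
  have h : |x i| = Real.sqrt ((x i) ^ 2) := (Real.sqrt_sq_eq_abs _).symm
  rw [h, show ‖x‖ = Real.sqrt (‖x‖ ^ 2) from (Real.sqrt_sq (norm_nonneg _)).symm]
  apply Real.sqrt_le_sqrt
  rw [norm_sq_eq]
  fin_cases i <;> simp <;> nlinarith [sq_nonneg (x 0), sq_nonneg (x 1), sq_nonneg (x 2)]

lemma coord_sub0 (ξ : E3) (lam : ℝ) : (ξ - lam • e3) 0 = ξ 0 := by
  simp [e3, EuclideanSpace.single_apply]

lemma coord_sub1 (ξ : E3) (lam : ℝ) : (ξ - lam • e3) 1 = ξ 1 := by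
  simp [e3, EuclideanSpace.single_apply]

lemma coord_sub2 (ξ : E3) (lam : ℝ) : (ξ - lam • e3) 2 = ξ 2 - lam := by
  simp [e3, EuclideanSpace.single_apply]

lemma vhat_norm_le (Fh : E3 → Fin 3 → ℂ) (lam : ℝ) (ξ : E3) :
    ‖vhat Fh lam ξ‖ ≤ 2 * ‖Fh (ξ - lam • e3)‖ := by
  set b := Fh (ξ - lam • e3) with hb
  have hcoord : ∀ j k : Fin 3, ‖((ξ j : ℝ) : ℂ) * b k‖ ≤ ‖ξ‖ * ‖b‖ := by
    intro j k
    rw [norm_mul, Complex.norm_real, Real.norm_eq_abs]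
    exact mul_le_mul (abs_coord_le ξ j) (norm_le_pi_norm b k) (norm_nonneg _)
      (norm_nonneg _)
  have h : ∀ j k j' k' : Fin 3,
      ‖((ξ j : ℝ):ℂ) * b k - ((ξ j' : ℝ):ℂ) * b k'‖ ≤ 2 * ‖ξ‖ * ‖b‖ := by
    intro j k j' k'
    calc ‖((ξ j : ℝ):ℂ) * b k - ((ξ j' : ℝ):ℂ) * b k'‖
        ≤ ‖((ξ j : ℝ):ℂ) * b k‖ + ‖((ξ j' : ℝ):ℂ) * b k'‖ := norm_sub_le _ _
      _ ≤ 2 * ‖ξ‖ * ‖b‖ := by linarith [hcoord j k, hcoord j' k']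
  have hcross : ‖crossProduct (fun j => ((ξ j : ℝ) : ℂ)) b‖ ≤ 2 * ‖ξ‖ * ‖b‖ := by
    rw [pi_norm_le_iff_of_nonneg (by positivity)]
    intro i
    fin_cases i <;>
      · simp only [crossProduct, LinearMap.mk₂_apply, Matrix.cons_val_zero,
          Matrix.cons_val_one, Matrix.head_cons, Matrix.cons_val_two, Matrix.tail_cons,
          Fin.isValue, Fin.mk_one]
        first
          | exact h 1 2 2 1
          | exact h 2 0 0 2
          | exact h 0 1 1 0
  unfold vhat
  rw [← hb, norm_smul, norm_mul, Complex.norm_I, one_mul, norm_inv, Complex.norm_real,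
    Real.norm_eq_abs, abs_norm]
  calc ‖ξ‖⁻¹ * ‖crossProduct (fun j => ((ξ j : ℝ) : ℂ)) b‖
      ≤ ‖ξ‖⁻¹ * (2 * ‖ξ‖ * ‖b‖) :=
        mul_le_mul_of_nonneg_left hcross (by positivity)
    _ ≤ 2 * ‖b‖ := by
        rcases eq_or_ne ‖ξ‖ 0 with hz | hz
        · simp [hz]
        · rw [show ‖ξ‖⁻¹ * (2 * ‖ξ‖ * ‖b‖) = 2 * ‖b‖ by field_simp]

/-- if f̂ is supported in the closed unit ball and square integrable, then for
λ > 1 the Fourier support of v_λ lies in the cone {angle(ξ, e₃) ≤ arcsin(1/λ)} and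
‖v_λ‖_{Ḣ^{1/2}} ≤ C λ^{1/2} ‖f̂‖_{L²}. -/
theorem stmt_11 :
    ∃ C > (0 : ℝ), ∀ Fh : E3 → Fin 3 → ℂ, Measurable Fh →
      (∀ ξ : E3, 1 < ‖ξ‖ → Fh ξ = 0) →
      Integrable (fun ξ : E3 => ‖Fh ξ‖ ^ 2) →
      ∀ lam : ℝ, 1 < lam →
        (∀ ξ : E3, vhat Fh lam ξ ≠ 0 → angle ξ e3 ≤ Real.arcsin (1 / lam)) ∧
        Real.sqrt (∫ ξ : E3, ‖ξ‖ * ‖vhat Fh lam ξ‖ ^ 2) ≤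
          C * Real.sqrt lam * Real.sqrt (∫ ξ : E3, ‖Fh ξ‖ ^ 2) := by
  refine ⟨3, by norm_num, ?_⟩
  intro Fh hFm hFsupp hFint lam hlam
  have hlam0 : (0:ℝ) < lam := lt_trans one_pos hlam
  constructor
  · -- angle bound
    intro ξ hv
    have hB : Fh (ξ - lam • e3) ≠ 0 := by
      intro h
      apply hv
      unfold vhat
      rw [h, map_zero, smul_zero]
    have hle : ‖ξ - lam • e3‖ ≤ 1 := le_of_not_gt fun h => hB (hFsupp _ h)
    have hsq : ‖ξ - lam • e3‖ ^ 2 ≤ 1 := by nlinarith [norm_nonneg (ξ - lam • e3)]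
    rw [norm_sq_eq, coord_sub0, coord_sub1, coord_sub2] at hsq
    -- hsq : (ξ 0)^2 + (ξ 1)^2 + (ξ 2 - lam)^2 ≤ 1
    have ht : lam - 1 ≤ ξ 2 := by
      nlinarith [sq_nonneg (ξ 0), sq_nonneg (ξ 1), sq_nonneg (ξ 2 - lam + 1)]
    have ht0 : 0 < ξ 2 := by linarith
    have key : (lam ^ 2 - 1) * ((ξ 0) ^ 2 + (ξ 1) ^ 2) ≤ (ξ 2) ^ 2 := by
      nlinarith [sq_nonneg (lam * (ξ 2 - lam) + 1),
        mul_nonneg (by nlinarith : (0:ℝ) ≤ lam ^ 2 - 1)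
          (by nlinarith : (0:ℝ) ≤ 1 - ((ξ 0) ^ 2 + (ξ 1) ^ 2 + (ξ 2 - lam) ^ 2))]
    have hN0 : 0 < ‖ξ‖ := by
      have h1 : (ξ 2) ^ 2 ≤ ‖ξ‖ ^ 2 := by
        rw [norm_sq_eq]; nlinarith [sq_nonneg (ξ 0), sq_nonneg (ξ 1)]
      nlinarith [norm_nonneg ξ]
    have hN2 : ‖ξ‖ ^ 2 = (ξ 0) ^ 2 + (ξ 1) ^ 2 + (ξ 2) ^ 2 := norm_sq_eq ξ
    have h2 : 1 - (1 / lam) ^ 2 ≤ (ξ 2 / ‖ξ‖) ^ 2 := by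
      have hdp : (ξ 2 / ‖ξ‖) ^ 2 = (ξ 2) ^ 2 / ‖ξ‖ ^ 2 := div_pow _ _ 2
      rw [hdp, le_div_iff₀ (by positivity)]
      have hinv : (1 / lam) ^ 2 * lam ^ 2 = 1 := by field_simp
      nlinarith [mul_le_mul_of_nonneg_left key (sq_nonneg (1 / lam))]
    have hcos : Real.sqrt (1 - (1 / lam) ^ 2) ≤ ξ 2 / ‖ξ‖ := by
      have h3 : Real.sqrt (1 - (1 / lam) ^ 2) ≤ Real.sqrt ((ξ 2 / ‖ξ‖) ^ 2) :=
        Real.sqrt_le_sqrt h2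
      rwa [Real.sqrt_sq (by positivity)] at h3
    have hangle : angle ξ e3 = Real.arccos (ξ 2 / ‖ξ‖) := by
      unfold angle
      rw [show (inner ℝ ξ e3 : ℝ) = ξ 2 by
        simp [e3, EuclideanSpace.inner_single_right]]
      rw [show ‖e3‖ = 1 by simp [e3, EuclideanSpace.norm_single], mul_one]
    rw [hangle, Real.arcsin_eq_arccos (by positivity)]
    unfold Real.arccos
    have := Real.monotone_arcsin hcos
    linarith
  · -- norm bound
    set c := lam • e3 with hc
    have hbound : ∀ ξ : E3, ‖ξ‖ * ‖vhat Fh lam ξ‖ ^ 2 ≤ 8 * lam * ‖Fh (ξ - c)‖ ^ 2 := by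
      intro ξ
      by_cases hB : Fh (ξ - c) = 0
      · have hz : vhat Fh lam ξ = 0 := by
          unfold vhat; rw [← hc, hB, map_zero, smul_zero]
        rw [hz, hB]; simp
      · have hle : ‖ξ - c‖ ≤ 1 := le_of_not_gt fun h => hB (hFsupp _ h)
        have hnc : ‖c‖ = lam := by
          rw [hc, norm_smul, Real.norm_eq_abs, abs_of_pos hlam0,
            show ‖e3‖ = 1 by simp [e3, EuclideanSpace.norm_single], mul_one]
        have hξ : ‖ξ‖ ≤ 2 * lam := by
          have h1 : ‖ξ‖ ≤ ‖ξ - c‖ + ‖c‖ := by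
            calc ‖ξ‖ = ‖(ξ - c) + c‖ := by rw [sub_add_cancel]
              _ ≤ ‖ξ - c‖ + ‖c‖ := norm_add_le _ _
          rw [hnc] at h1
          linarith
        have hv := vhat_norm_le Fh lam ξ
        rw [← hc] at hv
        have hv2 : ‖vhat Fh lam ξ‖ ^ 2 ≤ (2 * ‖Fh (ξ - c)‖) ^ 2 :=
          pow_le_pow_left₀ (norm_nonneg _) hv 2
        have hmm := mul_le_mul hξ hv2 (by positivity) (by positivity)
        nlinarith [hmm]
    have hg : Integrable (fun ξ : E3 => 8 * lam * ‖Fh (ξ - c)‖ ^ 2) :=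
      (hFint.comp_sub_right c).const_mul _
    have hI : ∫ ξ : E3, ‖ξ‖ * ‖vhat Fh lam ξ‖ ^ 2 ≤ ∫ ξ : E3, 8 * lam * ‖Fh (ξ - c)‖ ^ 2 :=
      integral_mono_of_nonneg (ae_of_all _ fun ξ => by positivity) hg
        (ae_of_all _ hbound)
    have hEq : ∫ ξ : E3, 8 * lam * ‖Fh (ξ - c)‖ ^ 2 = 8 * lam * ∫ ξ : E3, ‖Fh ξ‖ ^ 2 := by
      rw [integral_const_mul, integral_sub_right_eq_self (fun ξ => ‖Fh ξ‖ ^ 2) c]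
    set M := ∫ ξ : E3, ‖Fh ξ‖ ^ 2 with hM
    have hM0 : 0 ≤ M := integral_nonneg fun ξ => by positivity
    calc Real.sqrt (∫ ξ : E3, ‖ξ‖ * ‖vhat Fh lam ξ‖ ^ 2)
        ≤ Real.sqrt (8 * lam * M) := Real.sqrt_le_sqrt (by linarith [hEq ▸ hI])
      _ = Real.sqrt 8 * Real.sqrt lam * Real.sqrt M := by
          rw [Real.sqrt_mul (by positivity), Real.sqrt_mul (by norm_num)]
      _ ≤ 3 * Real.sqrt lam * Real.sqrt M := by
          have h8 : Real.sqrt 8 ≤ 3 := by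
            rw [show (3:ℝ) = Real.sqrt 9 by
              rw [show (9:ℝ) = 3 ^ 2 by norm_num, Real.sqrt_sq (by norm_num)]]
            exact Real.sqrt_le_sqrt (by norm_num)
          nlinarith [mul_nonneg (Real.sqrt_nonneg lam) (Real.sqrt_nonneg M), h8]
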